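/- Let N be a von Neumann algebra, H ∈ N a positive operator, and E the projection onto the closure of the range of H. Then the strong-operator closure of {HXH : X ∈ N} equals ENE. -/

import Mathlib

open TopologicalSpace

noncomputable section

namespace VNPaper

variable {H : Type*} [NormedAddCommGroup H] [InnerProductSpace ℂ H] [CompleteSpace H]

/-- A unitary operator on `H`. -/
def IsUnitaryOp (U : H →L[ℂ] H) : Prop := U * star U = 1 ∧ star U * U = 1

/-- Image of a set of operators under conjugation `x ↦ U x U*`. -/
def conjSet (U : H →L[ℂ] H) (S : Set (H →L[ℂ] H)) : Set (H →L[ℂ] H) :=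
  (fun x => U * x * star U) '' S

/-- `N` is singular in `M`: the only unitaries of `M` normalizing `N` lie in `N`. -/
def SingularIn (N M : Set (H →L[ℂ] H)) : Prop :=
  ∀ U ∈ M, IsUnitaryOp U → conjSet U N = N → U ∈ N

/-- The unitary normalizer of `N` in `M`. -/
def normalizerSet (N M : Set (H →L[ℂ] H)) : Set (H →L[ℂ] H) :=
  {U | U ∈ M ∧ IsUnitaryOp U ∧ conjSet U N = N}

/-- Partial isometry. -/
def IsPartialIsom (V : H →L[ℂ] H) : Prop := V * star V * V = V

/-- Projection (self-adjoint idempotent). -/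
def IsProjOp (p : H →L[ℂ] H) : Prop := IsSelfAdjoint p ∧ p * p = p

/-- Compression `E S E` of a set of operators. -/
def compress (E : H →L[ℂ] H) (S : Set (H →L[ℂ] H)) : Set (H →L[ℂ] H) :=
  (fun x => E * x * E) '' S

/-- The normalizing groupoid of `N` in `M`: partial isometries `V ∈ M` with initial and final
projections `E, F ∈ N` such that `V (E N E) V* = F N F`. -/
def groupoidSet (N M : Set (H →L[ℂ] H)) : Set (H →L[ℂ] H) :=
  {V | V ∈ M ∧ IsPartialIsom V ∧ star V * V ∈ N ∧ V * star V ∈ N ∧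
    conjSet V (compress (star V * V) N) = compress (V * star V) N}

/-- The von Neumann algebra generated by a set of operators (double commutant). -/
def gen (S : Set (H →L[ℂ] H)) : Set (H →L[ℂ] H) :=
  Set.centralizer (Set.centralizer S)

/-- `N` is regular in `M`: the normalizer of `N` in `M` generates `M`. -/
def RegularIn (N M : Set (H →L[ℂ] H)) : Prop :=
  gen (normalizerSet N M) = M

/-- The Hilbert space `ℓ²(ι, H) = H ⊗ ℓ²(ι)`. -/
abbrev l2 (ι : Type*) (H : Type*) [NormedAddCommGroup H] [InnerProductSpace ℂ H] :=
  lp (fun _ : ι => H) 2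

/-- The `(i,j)` matrix entry of an operator on `ℓ²(ι, H)`. -/
def entry {ι : Type*} (T : l2 ι H →L[ℂ] l2 ι H) (i j : ι) : H →L[ℂ] H :=
  letI : DecidableEq ι := Classical.decEq ι
  LinearMap.mkContinuous
    { toFun := fun h => T (lp.single 2 j h) i
      map_add' := fun a b => by
        have hs : lp.single (E := fun _ : ι => H) 2 j (a + b)
            = lp.single 2 j a + lp.single 2 j b := by
          apply lp.ext
          funext k
          by_cases hk : k = j
          · subst hk
            simp [lp.single_apply_self]
          · simp [lp.single_apply_ne _ _ _ hk]
        dsimp only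
        rw [hs, map_add]
        rfl
      map_smul' := fun c a => by
        dsimp only
        rw [show lp.single (E := fun _ : ι => H) 2 j (c • a) = c • lp.single 2 j a from
          lp.single_smul (E := fun _ : ι => H) 2 j c a, map_smul]
        rfl }
    ‖T‖
    (fun h => by
      calc ‖T (lp.single 2 j h) i‖ ≤ ‖T (lp.single 2 j h)‖ :=
            lp.norm_apply_le_norm (by norm_num) _ i
        _ ≤ ‖T‖ * ‖lp.single (E := fun _ : ι => H) 2 j h‖ := T.le_opNorm _
        _ = ‖T‖ * ‖h‖ := by
            rw [show ‖lp.single (E := fun _ : ι => H) 2 j h‖ = ‖h‖ from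
              lp.norm_single (E := fun _ : ι => H) (by norm_num) j h])

/-- The model of `S ⊗̄ B(ℓ²(ι))` inside `B(ℓ²(ι, H))`: operators all of whose matrix
entries lie in `S`. -/
def tensorB (S : Set (H →L[ℂ] H)) (ι : Type*) : Set (l2 ι H →L[ℂ] l2 ι H) :=
  {T | ∀ i j, entry T i j ∈ S}

/-- `N` is completely singular in `M`: `N ⊗̄ B(K)` is singular in `M ⊗̄ B(K)` for every
Hilbert space `K` (modelled as `ℓ²(ι)` over all index types `ι`). -/
def CompletelySingularIn (N M : Set (H →L[ℂ] H)) : Prop :=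
  ∀ ι : Type, SingularIn (tensorB N ι) (tensorB M ι)

/-- A finite von Neumann algebra: every isometry in it is a unitary. -/
def IsFiniteVN (M : Set (H →L[ℂ] H)) : Prop :=
  ∀ V ∈ M, star V * V = 1 → V * star V = 1

/-- A factor: trivial center. -/
def IsFactorVN (M : Set (H →L[ℂ] H)) : Prop :=
  ∀ x ∈ M, (∀ y ∈ M, x * y = y * x) → ∃ c : ℂ, x = c • (1 : H →L[ℂ] H)

/-- Abelian set of operators. -/
def IsAbelianSet (S : Set (H →L[ℂ] H)) : Prop :=
  ∀ x ∈ S, ∀ y ∈ S, x * y = y * x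

/-- A type II₁ factor: an infinite-dimensional finite factor. -/
def IsII1Factor (M : VonNeumannAlgebra H) : Prop :=
  IsFiniteVN (M : Set (H →L[ℂ] H)) ∧ IsFactorVN (M : Set (H →L[ℂ] H)) ∧
    ¬ ∃ (s : Finset (H →L[ℂ] H)), (↑s ⊆ (M : Set (H →L[ℂ] H))) ∧
        ∀ x ∈ (M : Set (H →L[ℂ] H)), x ∈ Submodule.span ℂ (↑s : Set (H →L[ℂ] H))

/-- Countably decomposable: every orthogonal family of nonzero projections is countable. -/
def CountablyDecomposable (N : Set (H →L[ℂ] H)) : Prop :=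
  ∀ S : Set (H →L[ℂ] H), (∀ p ∈ S, p ∈ N ∧ IsProjOp p ∧ p ≠ 0) →
    (S.Pairwise fun p q => p * q = 0) → S.Countable

/-- Properly infinite: every nonzero central projection `z` of `N` is infinite, i.e. `z` is
Murray–von Neumann equivalent in `N` to a proper subprojection of itself. -/
def ProperlyInfinite (N : Set (H →L[ℂ] H)) : Prop :=
  ∀ z ∈ N, IsProjOp z → z ≠ 0 → (∀ y ∈ N, z * y = y * z) →
    ∃ v ∈ N, star v * v = z ∧ z * v = v ∧ v * star v ≠ z

/-- Basic-neighbourhood description of the strong-operator closure of a set of operators. -/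
def sotClosure (S : Set (H →L[ℂ] H)) : Set (H →L[ℂ] H) :=
  {T | ∀ ε : ℝ, 0 < ε → ∀ F : Finset H, ∃ X ∈ S, ∀ h ∈ F, ‖(T - X) h‖ < ε}

/-- `E` is the projection onto the closure of the range of `A`: the smallest projection `p`
with `p A = A`. -/
def IsRangeProjOf (E A : H →L[ℂ] H) : Prop :=
  IsProjOp E ∧ E * A = A ∧ ∀ p, IsProjOp p → p * A = A → (p - E).IsPositive

/-- `A = V P` is the polar decomposition of `A`: `P = (A* A)^{1/2} ≥ 0`, `V` a partial isometry
whose initial projection `V* V` is the range projection of `P`. -/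
def IsPolarDecomp (A V P : H →L[ℂ] H) : Prop :=
  A = V * P ∧ P.IsPositive ∧ P * P = star A * A ∧ IsPartialIsom V ∧
    IsRangeProjOf (star V * V) P

/-- An injective von Neumann algebra: the range of a norm-one idempotent (conditional
expectation) on `B(H)`. -/
def IsInjectiveVN (B : Set (H →L[ℂ] H)) : Prop :=
  ∃ Φ : (H →L[ℂ] H) →L[ℂ] (H →L[ℂ] H), ‖Φ‖ ≤ 1 ∧ (∀ x, Φ x ∈ B) ∧ ∀ x ∈ B, Φ x = x

end VNPaper

/-- Data realizing the spatial tensor product of operators on `H₁` and `H₂` on a Hilbert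
space `HT`: commuting embeddings `x ↦ x ⊗ 1`, `y ↦ 1 ⊗ y`, satisfying the commutation
theorem for generated von Neumann algebras. -/
structure VNTensorData (H₁ : Type*) (H₂ : Type*) (HT : Type*)
    [NormedAddCommGroup H₁] [InnerProductSpace ℂ H₁] [CompleteSpace H₁]
    [NormedAddCommGroup H₂] [InnerProductSpace ℂ H₂] [CompleteSpace H₂]
    [NormedAddCommGroup HT] [InnerProductSpace ℂ HT] [CompleteSpace HT] where
  e₁ : (H₁ →L[ℂ] H₁) →⋆ₐ[ℂ] (HT →L[ℂ] HT)
  e₂ : (H₂ →L[ℂ] H₂) →⋆ₐ[ℂ] (HT →L[ℂ] HT)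
  injective_e₁ : Function.Injective e₁
  injective_e₂ : Function.Injective e₂
  commute : ∀ x y, e₁ x * e₂ y = e₂ y * e₁ x
  commutation : ∀ (S₁ : Set (H₁ →L[ℂ] H₁)) (S₂ : Set (H₂ →L[ℂ] H₂)),
    Set.centralizer (e₁ '' S₁ ∪ e₂ '' S₂) =
      VNPaper.gen (e₁ '' Set.centralizer S₁ ∪ e₂ '' Set.centralizer S₂)

namespace VNTensorData

variable {H₁ H₂ HT : Type*}
    [NormedAddCommGroup H₁] [InnerProductSpace ℂ H₁] [CompleteSpace H₁]
    [NormedAddCommGroup H₂] [InnerProductSpace ℂ H₂] [CompleteSpace H₂]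
    [NormedAddCommGroup HT] [InnerProductSpace ℂ HT] [CompleteSpace HT]

/-- The von Neumann tensor product `S₁ ⊗̄ S₂` realized on `HT`. -/
def prod (D : VNTensorData H₁ H₂ HT) (S₁ : Set (H₁ →L[ℂ] H₁)) (S₂ : Set (H₂ →L[ℂ] H₂)) :
    Set (HT →L[ℂ] HT) :=
  VNPaper.gen (D.e₁ '' S₁ ∪ D.e₂ '' S₂)

end VNTensorData



open ContinuousLinearMap RCLike

namespace SandwichAux
variable {H : Type*} [NormedAddCommGroup H] [InnerProductSpace ℂ H] [CompleteSpace H]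

lemma isClosed_centralizer (S : Set (H →L[ℂ] H)) : IsClosed (Set.centralizer S) := by
  have h : Set.centralizer S = ⋂ m ∈ S, {x : H →L[ℂ] H | m * x = x * m} := by
    ext x; simp [Set.mem_centralizer_iff]
  rw [h]
  exact isClosed_biInter fun m _ =>
    isClosed_eq (continuous_const.mul continuous_id) (continuous_id.mul continuous_const)

lemma vn_isClosed (N : VonNeumannAlgebra H) : IsClosed (N : Set (H →L[ℂ] H)) := by
  rw [← N.centralizer_centralizer]; exact isClosed_centralizer _

lemma cfc_mem_vn (N : VonNeumannAlgebra H) {A : H →L[ℂ] H} (hA : A ∈ N)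
    (hsa : IsSelfAdjoint A) (f : ℝ → ℝ) (hf : Continuous f) : cfc f A ∈ N := by
  have hcl := vn_isClosed N
  have : cfc f A ∈ closure (N : Set (H →L[ℂ] H)) := by
    rw [Metric.mem_closure_iff]
    intro ε hε
    set M : ℝ := ‖A‖ * ‖(1 : H →L[ℂ] H)‖ with hM
    obtain ⟨p, hp⟩ := exists_polynomial_near_of_continuousOn (-M) M f hf.continuousOn (ε/2)
      (by positivity)
    have hspec : ∀ x ∈ spectrum ℝ A, x ∈ Set.Icc (-M) M := by
      intro x hx
      have := spectrum.norm_le_norm_mul_of_mem hx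
      rw [Real.norm_eq_abs] at this
      exact abs_le.mp this
    refine ⟨Polynomial.aeval A (p.map (algebraMap ℝ ℂ)), ?_, ?_⟩
    · have h1 : Polynomial.aeval A (p.map (algebraMap ℝ ℂ)) ∈ Algebra.adjoin ℂ {A} := by
        rw [Algebra.adjoin_singleton_eq_range_aeval]
        exact ⟨p.map (algebraMap ℝ ℂ), rfl⟩
      have h2 : Algebra.adjoin ℂ {A} ≤ N.toStarSubalgebra.toSubalgebra :=
        Algebra.adjoin_le (by simpa using hA)
      exact h2 h1
    · rw [Polynomial.aeval_map_algebraMap, dist_eq_norm, ← cfc_polynomial p A,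
        ← cfc_sub f p.eval A]
      calc ‖cfc (fun x => f x - p.eval x) A‖ ≤ ε/2 := by
            refine norm_cfc_le (by positivity) fun x hx => ?_
            rw [Real.norm_eq_abs, abs_sub_comm]
            exact (hp x (hspec x hx)).le
        _ < ε := by linarith
  rwa [hcl.closure_eq] at this

end SandwichAux


namespace SandwichAux
variable {H : Type*} [NormedAddCommGroup H] [InnerProductSpace ℂ H] [CompleteSpace H]

local notation "⟪" x ", " y "⟫" => @inner ℂ _ _ x y

lemma selfadj_inner_move {B : H →L[ℂ] H} (hsa : IsSelfAdjoint B) (x y : H) :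
    ⟪B x, y⟫ = ⟪x, B y⟫ := by
  conv_lhs => rw [← hsa.adjoint_eq]
  exact adjoint_inner_left B y x

lemma eq_zero_of_isPositive_neg {B : H →L[ℂ] H} (hsa : IsSelfAdjoint B)
    (hpos : B.IsPositive) (hsq : B * B = -B) : B = 0 := by
  ext v
  have h1 : ‖B v‖ ^ 2 = re ⟪B v, B v⟫ := (inner_self_eq_norm_sq (𝕜 := ℂ) (B v)).symm
  have h2 : ⟪B v, B v⟫ = -⟪v, B v⟫ := by
    rw [selfadj_inner_move hsa]
    have : B (B v) = -(B v) := by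
      have := congrArg (fun T => T v) hsq
      simpa [mul_apply] using this
    rw [this, inner_neg_right]
  have h3 : 0 ≤ re ⟪v, B v⟫ := hpos.re_inner_nonneg_right v
  have h4 : ‖B v‖ ^ 2 ≤ 0 := by rw [h1, h2, map_neg]; linarith
  have : ‖B v‖ = 0 := by nlinarith [norm_nonneg (B v)]
  simpa using norm_eq_zero.mp this

lemma norm_proj_apply_le {E : H →L[ℂ] H} (hsa : IsSelfAdjoint E) (hidem : E * E = E)
    (v : H) : ‖E v‖ ≤ ‖v‖ := by
  have h1 : ‖E v‖ ^ 2 = re ⟪E v, E v⟫ := (inner_self_eq_norm_sq (𝕜 := ℂ) (E v)).symm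
  have h2 : ⟪E v, E v⟫ = ⟪v, E v⟫ := by
    rw [selfadj_inner_move hsa]
    congr 1
    have := congrArg (fun T => T v) hidem
    simpa [mul_apply] using this
  have h3 : re ⟪v, E v⟫ ≤ ‖v‖ * ‖E v‖ := re_inner_le_norm v (E v)
  have h4 : ‖E v‖ ^ 2 ≤ ‖v‖ * ‖E v‖ := by rw [h1, h2]; exact h3
  nlinarith [norm_nonneg (E v), norm_nonneg v]

end SandwichAux

namespace SandwichAux
variable {H : Type*} [NormedAddCommGroup H] [InnerProductSpace ℂ H] [CompleteSpace H]

lemma proj_eq_orthProj {A E : H →L[ℂ] H} (hAsa : IsSelfAdjoint A) (hEsa : IsSelfAdjoint E)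
    (hidem : E * E = E) (hEA : E * A = A)
    (hmin : ∀ p : H →L[ℂ] H, (IsSelfAdjoint p ∧ p * p = p) → p * A = A →
      (p - E).IsPositive) :
    ∀ v, E v ∈ closure (Set.range A) := by
  set K : Submodule ℂ H := (LinearMap.range (A : H →ₗ[ℂ] H)).topologicalClosure with hK
  haveI : CompleteSpace K := (Submodule.isClosed_topologicalClosure _).completeSpace_coe
  set P : H →L[ℂ] H := K.subtypeL.comp K.orthogonalProjectionOnto with hP
  have hcoe : (K : Set H) = closure (Set.range A) := by
    rw [hK, Submodule.topologicalClosure_coe, LinearMap.coe_range, ContinuousLinearMap.coe_coe]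
  have hPsa : IsSelfAdjoint P := isSelfAdjoint_starProjection K
  have hfix : ∀ x ∈ K, P x = x := by
    intro x hx
    exact K.starProjection_eq_self_iff.mpr hx
  have hmemK : ∀ x, P x ∈ K := fun x => (K.orthogonalProjectionOnto x).2
  have hPidem : P * P = P := by
    ext v; exact hfix _ (hmemK v)
  have hAv : ∀ v, A v ∈ K := fun v =>
    Submodule.le_topologicalClosure _ (LinearMap.mem_range_self _ v)
  have hPA : P * A = A := by
    ext v; exact hfix _ (hAv v)
  have hEfix : ∀ x ∈ K, E x = x := by
    intro x hx
    have hsub : Set.range A ⊆ {y : H | E y = y} := by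
      rintro _ ⟨w, rfl⟩
      have := congrArg (fun T : H →L[ℂ] H => T w) hEA
      simpa [mul_apply] using this
    have hclosed : IsClosed {y : H | E y = y} :=
      isClosed_eq E.continuous continuous_id
    have : (K : Set H) ⊆ {y : H | E y = y} := by
      rw [hcoe]; exact closure_minimal hsub hclosed
    exact this hx
  have hEP : E * P = P := by ext v; exact hEfix _ (hmemK v)
  have hPE : P * E = P := by
    have := congrArg star hEP
    rwa [star_mul, hPsa.star_eq, hEsa.star_eq] at this
  have hBpos : (P - E).IsPositive := hmin P ⟨hPsa, hPidem⟩ hPA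
  have hBsa : IsSelfAdjoint (P - E) := hPsa.sub hEsa
  have hBsq : (P - E) * (P - E) = -(P - E) := by
    rw [mul_sub, sub_mul, sub_mul, hPidem, hPE, hEP, hidem]
    abel
  have hPEeq : P = E := by
    have := eq_zero_of_isPositive_neg hBsa hBpos hBsq
    linear_combination (norm := abel) this
  intro v
  rw [← hPEeq, ← hcoe]
  exact hmemK v

end SandwichAux

namespace SandwichAux
noncomputable section

def hfun (c t : ℝ) : ℝ := c^2*t^2 / (1 + c^2*t^2)
def gfun (c t : ℝ) : ℝ := c^2*t / (1 + c^2*t^2)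

lemma denom_pos (c t : ℝ) : 0 < 1 + c^2*t^2 := by positivity

lemma hfun_cont (c : ℝ) : Continuous (hfun c) := by
  apply Continuous.div (by continuity) (by continuity)
  intro t; exact (denom_pos c t).ne'

lemma gfun_cont (c : ℝ) : Continuous (gfun c) := by
  apply Continuous.div (by continuity) (by continuity)
  intro t; exact (denom_pos c t).ne'

lemma hfun_eq_mul (c t : ℝ) : hfun c t = t * gfun c t := by
  unfold hfun gfun; field_simp

lemma hfun_eq_mul' (c t : ℝ) : hfun c t = gfun c t * t := by
  rw [hfun_eq_mul]; ring

lemma hfun_nonneg (c t : ℝ) : 0 ≤ hfun c t := by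
  unfold hfun; positivity

lemma hfun_le_one (c t : ℝ) : hfun c t ≤ 1 := by
  unfold hfun
  rw [div_le_one (denom_pos c t)]
  linarith

lemma hfun_abs_le_one (c t : ℝ) : |hfun c t| ≤ 1 := by
  rw [abs_of_nonneg (hfun_nonneg c t)]; exact hfun_le_one c t

lemma hfun_mul_id_bound (c : ℝ) (hc : 0 < c) (t : ℝ) :
    |t * hfun c t - t| ≤ 1 / (2*c) := by
  have hd := denom_pos c t
  have heq : t * hfun c t - t = -t / (1 + c^2*t^2) := by
    unfold hfun; field_simp; ring
  rw [heq, abs_div, abs_of_pos hd, div_le_div_iff₀ hd (by positivity)]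
  have h2 : 2*c*|t| ≤ 1 + c^2*t^2 := by
    nlinarith [sq_nonneg (1 - c*|t|), sq_abs t, abs_nonneg t]
  calc |(-t)| * (2*c) = 2*c*|t| := by rw [abs_neg]; ring
    _ ≤ 1 + c^2*t^2 := h2
    _ = 1 * (1 + c^2*t^2) := by ring

lemma hfun_sq_le (c : ℝ) (hc : 0 < c) (t : ℝ) (ht : 0 ≤ t) :
    hfun c t ^ 2 ≤ c * t := by
  have h1 : hfun c t ≤ c * t := by
    unfold hfun
    rw [div_le_iff₀ (denom_pos c t)]
    nlinarith [sq_nonneg (c*t - 1), mul_nonneg hc.le ht]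
  nlinarith [hfun_nonneg c t, hfun_le_one c t]

end
end SandwichAux

namespace SandwichAux
open ContinuousLinearMap RCLike
variable {H : Type*} [NormedAddCommGroup H] [InnerProductSpace ℂ H] [CompleteSpace H]

local notation "⟪" x ", " y "⟫" => @inner ℂ _ _ x y

variable {A : H →L[ℂ] H}

lemma norm_cfc_hfun_le_one (c : ℝ) : ‖cfc (hfun c) A‖ ≤ 1 :=
  norm_cfc_le zero_le_one fun x _ => by
    rw [Real.norm_eq_abs]; exact hfun_abs_le_one c x

lemma A_mul_cfc_hfun (hsa : IsSelfAdjoint A) (c : ℝ) :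
    A * cfc (hfun c) A = cfc (fun t => t * hfun c t) A := by
  have h := cfc_mul (fun t : ℝ => t) (hfun c) A (by fun_prop) ((hfun_cont c).continuousOn)
  rw [cfc_id' ℝ A hsa] at h
  exact h.symm

lemma cfc_hfun_mul_A (hsa : IsSelfAdjoint A) (c : ℝ) :
    cfc (hfun c) A * A = cfc (fun t => t * hfun c t) A := by
  have h := cfc_mul (hfun c) (fun t : ℝ => t) A ((hfun_cont c).continuousOn) (by fun_prop)
  rw [cfc_id' ℝ A hsa] at h
  rw [← h]
  simp only [mul_comm]

lemma norm_A_mul_cfc_hfun_sub (hsa : IsSelfAdjoint A) (c : ℝ) (hc : 0 < c) :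
    ‖A * cfc (hfun c) A - A‖ ≤ 1 / (2*c) := by
  rw [A_mul_cfc_hfun hsa c]
  have h := cfc_sub (fun t => t * hfun c t) (fun t : ℝ => t) A
      (by exact (continuous_id.mul (hfun_cont c)).continuousOn) (by fun_prop)
  rw [cfc_id' ℝ A hsa] at h
  rw [← h]
  exact norm_cfc_le (by positivity) fun x _ => by
    rw [Real.norm_eq_abs]; exact hfun_mul_id_bound c hc x

lemma cfc_hfun_ker (hpos : A.IsPositive) (c : ℝ) (hc : 0 < c) {v : H}
    (hv : A v = 0) : cfc (hfun c) A v = 0 := by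
  have hsa : IsSelfAdjoint A := hpos.isSelfAdjoint
  have hnn : 0 ≤ A := A.nonneg_iff_isPositive.mpr hpos
  set T : H →L[ℂ] H := cfc (hfun c) A with hT
  have hTsa : IsSelfAdjoint T := cfc_predicate (hfun c) A
  have hTT : T * T = cfc (fun t => hfun c t ^ 2) A := by
    rw [hT, ← cfc_mul _ _ A ((hfun_cont c).continuousOn) ((hfun_cont c).continuousOn)]
    simp only [sq]
  have hcA : cfc (fun t : ℝ => c * t) A = c • A := cfc_const_mul_id c A hsa
  have hD : 0 ≤ c • A - T * T := by
    rw [hTT, ← hcA, ← cfc_sub (fun t : ℝ => c * t) (fun t => hfun c t ^ 2) A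
      (by fun_prop) (by exact ((hfun_cont c).pow 2).continuousOn)]
    exact cfc_nonneg fun x hx =>
      sub_nonneg.mpr (hfun_sq_le c hc x (spectrum_nonneg_of_nonneg hnn hx))
  have hDpos : (c • A - T * T).IsPositive := (nonneg_iff_isPositive _).mp hD
  have h0 : 0 ≤ re ⟪(c • A - T * T) v, v⟫ := hDpos.re_inner_nonneg_left v
  have hDv : (c • A - T * T) v = -(T (T v)) := by
    simp [sub_apply, smul_apply, hv, mul_apply]
  have h1 : re ⟪T (T v), v⟫ ≤ 0 := by
    rw [hDv, inner_neg_left, map_neg] at h0; linarith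
  have e1 : ⟪T (T v), v⟫ = ⟪T v, T v⟫ := selfadj_inner_move hTsa (T v) v
  have h2 : ‖T v‖ ^ 2 ≤ 0 := by
    calc ‖T v‖ ^ 2 = re ⟪T v, T v⟫ := (inner_self_eq_norm_sq (𝕜 := ℂ) (T v)).symm
      _ = re ⟪T (T v), v⟫ := by rw [e1]
      _ ≤ 0 := h1
  have : ‖T v‖ = 0 := by nlinarith [norm_nonneg (T v)]
  simpa using norm_eq_zero.mp this

end SandwichAux

namespace SandwichAux
open ContinuousLinearMap RCLike
variable {H : Type*} [NormedAddCommGroup H] [InnerProductSpace ℂ H] [CompleteSpace H]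
variable {A E : H →L[ℂ] H}

lemma approx_on_vector (hpos : A.IsPositive) (hEsa : IsSelfAdjoint E)
    (hidem : E * E = E) (hEA : E * A = A)
    (hmin : ∀ p : H →L[ℂ] H, (IsSelfAdjoint p ∧ p * p = p) → p * A = A →
      (p - E).IsPositive) (v : H) {ε : ℝ} (hε : 0 < ε) :
    ∃ c₀ : ℝ, 1 ≤ c₀ ∧ ∀ c ≥ c₀, ‖cfc (hfun c) A v - E v‖ < ε := by
  have hsa : IsSelfAdjoint A := hpos.isSelfAdjoint
  have hAE : A * E = A := by
    have := congrArg star hEA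
    rwa [star_mul, hEsa.star_eq, hsa.star_eq] at this
  have hker : A (v - E v) = 0 := by
    have := congrArg (fun T : H →L[ℂ] H => T v) hAE
    simp only [mul_apply_eq_comp] at this
    simp [map_sub, this]
  have hmem : E v ∈ closure (Set.range A) := proj_eq_orthProj hsa hEsa hidem hEA hmin v
  obtain ⟨b, ⟨u, rfl⟩, hbu⟩ := Metric.mem_closure_iff.mp hmem (ε/3) (by positivity)
  rw [dist_eq_norm] at hbu
  refine ⟨max 1 (3*‖u‖/(2*ε) + 1), le_max_left _ _, fun c hc => ?_⟩
  have hc1 : (1:ℝ) ≤ c := le_trans (le_max_left _ _) hc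
  have hcpos : (0:ℝ) < c := lt_of_lt_of_le one_pos hc1
  have hcu : 3*‖u‖/(2*ε) + 1 ≤ c := le_trans (le_max_right _ _) hc
  set T : H →L[ℂ] H := cfc (hfun c) A with hT
  have hTv : T v = T (E v) := by
    have h0 : T (v - E v) = 0 := cfc_hfun_ker hpos c hcpos hker
    rw [map_sub] at h0
    exact sub_eq_zero.mp h0
  have hTA : T (A u) = (A * T) u := by
    have h1 : T * A = A * T := by
      rw [cfc_hfun_mul_A hsa c, A_mul_cfc_hfun hsa c]
    have := congrArg (fun S : H →L[ℂ] H => S u) h1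
    simpa [mul_apply] using this
  have b1 : ‖T (E v - A u)‖ < ε/3 := by
    calc ‖T (E v - A u)‖ ≤ ‖T‖ * ‖E v - A u‖ := T.le_opNorm _
      _ ≤ 1 * ‖E v - A u‖ :=
          mul_le_mul_of_nonneg_right (norm_cfc_hfun_le_one c) (norm_nonneg _)
      _ = ‖E v - A u‖ := one_mul _
      _ < ε/3 := hbu
  have b2 : ‖T (A u) - A u‖ < ε/3 := by
    have h3 : 3*‖u‖ ≤ (c-1)*(2*ε) := by
      have := (div_le_iff₀ (by positivity : (0:ℝ) < 2*ε)).mp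
        (by linarith : 3*‖u‖/(2*ε) ≤ c - 1)
      linarith
    have key : ‖A * T - A‖ * ‖u‖ < ε/3 := by
      have hb := norm_A_mul_cfc_hfun_sub hsa c hcpos
      have h4 : ‖A * T - A‖ * ‖u‖ ≤ 1/(2*c) * ‖u‖ :=
        mul_le_mul_of_nonneg_right hb (norm_nonneg _)
      have h5 : 1/(2*c) * ‖u‖ < ε/3 := by
        rw [div_mul_eq_mul_div, one_mul, div_lt_div_iff₀ (by positivity) (by norm_num)]
        nlinarith [hε]
      linarith
    calc ‖T (A u) - A u‖ = ‖(A * T - A) u‖ := by rw [hTA, sub_apply]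
      _ ≤ ‖A * T - A‖ * ‖u‖ := le_opNorm _ _
      _ < ε/3 := key
  have b3 : ‖A u - E v‖ < ε/3 := by rw [norm_sub_rev]; exact hbu
  calc ‖T v - E v‖ = ‖T (E v - A u) + (T (A u) - A u) + (A u - E v)‖ := by
        rw [hTv, map_sub]; congr 1; abel
    _ ≤ ‖T (E v - A u)‖ + ‖T (A u) - A u‖ + ‖A u - E v‖ := norm_add₃_le
    _ < ε/3 + ε/3 + ε/3 := by linarith
    _ = ε := by ring

end SandwichAux


open VNPaper
open SandwichAux ContinuousLinearMap

variable {H : Type*} [NormedAddCommGroup H] [InnerProductSpace ℂ H] [CompleteSpace H]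

/-- For a positive `A ∈ N` with range projection `E`, the strong-operator closure of
`{A X A : X ∈ N}` is `E N E`. -/
theorem sotClosure_sandwich (N : VonNeumannAlgebra H)
    (A : H →L[ℂ] H) (hA : A ∈ N) (hpos : A.IsPositive)
    (E : H →L[ℂ] H) (hE : IsRangeProjOf E A) :
    sotClosure ((fun X => A * X * A) '' (N : Set (H →L[ℂ] H)))
      = compress E (N : Set (H →L[ℂ] H)) := by
  classical
  unfold IsRangeProjOf IsProjOp at hE
  obtain ⟨⟨hEsa, hEidem⟩, hEA, hmin⟩ := hE
  have hsa : IsSelfAdjoint A := hpos.isSelfAdjoint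
  have hAE : A * E = A := by
    have := congrArg star hEA
    rwa [star_mul, hEsa.star_eq, hsa.star_eq] at this
  apply subset_antisymm
  · -- forward inclusion
    intro T hT
    have hTN : T ∈ (N : Set (H →L[ℂ] H)) := by
      rw [← N.centralizer_centralizer]
      refine Set.mem_centralizer_iff.mpr fun y hy => ?_
      ext v
      have key : ∀ δ : ℝ, 0 < δ → ‖(y * T) v - (T * y) v‖ ≤ δ * (1 + ‖y‖) := by
        intro δ hδ
        obtain ⟨X, hXS, happrox⟩ := hT δ hδ {v, y v}
        obtain ⟨Z, hZ, rfl⟩ := hXS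
        have hXN : A * Z * A ∈ N := mul_mem (mul_mem hA hZ) hA
        have hcomm : (A * Z * A) * y = y * (A * Z * A) := hy _ hXN
        have h1 : ‖(T - A * Z * A) v‖ < δ := happrox v (by simp)
        have h2 : ‖(T - A * Z * A) (y v)‖ < δ := happrox (y v) (by simp)
        have hc : A (Z (A (y v))) = y (A (Z (A v))) := by
          have := congrArg (fun S : H →L[ℂ] H => S v) hcomm
          simpa [mul_apply] using this
        have hvec : (y * T) v - (T * y) v
            = y ((T - A * Z * A) v) - (T - A * Z * A) (y v) := by
          simp only [mul_apply_eq_comp, sub_apply, map_sub]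
          rw [hc]; abel
        rw [hvec]
        calc ‖y ((T - A * Z * A) v) - (T - A * Z * A) (y v)‖
            ≤ ‖y ((T - A * Z * A) v)‖ + ‖(T - A * Z * A) (y v)‖ := norm_sub_le _ _
          _ ≤ ‖y‖ * ‖(T - A * Z * A) v‖ + ‖(T - A * Z * A) (y v)‖ := by
              gcongr; exact le_opNorm _ _
          _ ≤ ‖y‖ * δ + δ := by
              gcongr <;> first | exact h1.le | exact h2.le
          _ = δ * (1 + ‖y‖) := by ring
      have h0 : ‖(y * T) v - (T * y) v‖ ≤ 0 := by
        refine le_of_forall_pos_le_add fun δ hδ => ?_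
        have hy1 : (0:ℝ) < 1 + ‖y‖ := by positivity
        have := key (δ / (1 + ‖y‖)) (by positivity)
        rw [div_mul_cancel₀ _ hy1.ne'] at this
        linarith
      exact sub_eq_zero.mp (norm_le_zero_iff.mp h0)
    have hETE : E * T * E = T := by
      ext v
      have key : ∀ δ : ℝ, 0 < δ → ‖(E * T * E) v - T v‖ ≤ δ * 2 := by
        intro δ hδ
        obtain ⟨X, hXS, happrox⟩ := hT δ hδ {v, E v}
        obtain ⟨Z, hZ, rfl⟩ := hXS
        have hEXE : E * (A * Z * A) * E = A * Z * A := by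
          have h' : E * (A * Z * A) * E = (E * A) * (Z * (A * E)) := by
            simp only [mul_assoc]
          rw [h', hEA, hAE, ← mul_assoc]
        have h1 : ‖(T - A * Z * A) v‖ < δ := happrox v (by simp)
        have h2 : ‖(T - A * Z * A) (E v)‖ < δ := happrox (E v) (by simp)
        have hXv : E (A (Z (A (E v)))) = A (Z (A v)) := by
          have := congrArg (fun S : H →L[ℂ] H => S v) hEXE
          simpa [mul_apply] using this
        have hvec : (E * T * E) v - T v
            = E ((T - A * Z * A) (E v)) - (T - A * Z * A) v := by
          simp only [mul_apply_eq_comp, sub_apply, map_sub]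
          rw [hXv]; abel
        rw [hvec]
        calc ‖E ((T - A * Z * A) (E v)) - (T - A * Z * A) v‖
            ≤ ‖E ((T - A * Z * A) (E v))‖ + ‖(T - A * Z * A) v‖ := norm_sub_le _ _
          _ ≤ ‖(T - A * Z * A) (E v)‖ + ‖(T - A * Z * A) v‖ := by
              gcongr; exact norm_proj_apply_le hEsa hEidem _
          _ ≤ δ + δ := by gcongr <;> first | exact h1.le | exact h2.le
          _ = δ * 2 := by ring
      have h0 : ‖(E * T * E) v - T v‖ ≤ 0 := by
        refine le_of_forall_pos_le_add fun δ hδ => ?_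
        have := key (δ / 2) (by positivity)
        linarith
      exact sub_eq_zero.mp (norm_le_zero_iff.mp h0)
    exact ⟨T, hTN, hETE⟩
  · -- reverse inclusion
    rintro T ⟨X, hXN, rfl⟩
    intro ε hε F
    set δ : ℝ := ε / (2 * (‖X‖ + 1)) with hδdef
    have hδ : 0 < δ := by positivity
    have hch : ∀ v : H, ∃ c₀ : ℝ, 1 ≤ c₀ ∧ ∀ c ≥ c₀,
        ‖cfc (hfun c) A v - E v‖ < δ ∧
          ‖cfc (hfun c) A (X (E v)) - E (X (E v))‖ < ε / 2 := by
      intro v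
      obtain ⟨c₁, hc₁, H₁⟩ := approx_on_vector hpos hEsa hEidem hEA hmin v hδ
      obtain ⟨c₂, _, H₂⟩ :=
        approx_on_vector hpos hEsa hEidem hEA hmin (X (E v)) (half_pos hε)
      exact ⟨max c₁ c₂, le_trans hc₁ (le_max_left _ _), fun c hc =>
        ⟨H₁ c (le_trans (le_max_left _ _) hc), H₂ c (le_trans (le_max_right _ _) hc)⟩⟩
    choose c₀ hc₀1 hc₀ using hch
    set c : ℝ := 1 + ∑ v ∈ F, c₀ v with hcdef
    have hcge : ∀ v ∈ F, c₀ v ≤ c := by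
      intro v hv
      have h1 : c₀ v ≤ ∑ w ∈ F, c₀ w :=
        Finset.single_le_sum (fun w _ => le_trans zero_le_one (hc₀1 w)) hv
      simp only [hcdef]; linarith
    set Tc : H →L[ℂ] H := cfc (hfun c) A with hTcdef
    set G : H →L[ℂ] H := cfc (gfun c) A with hGdef
    have hGN : G ∈ N := cfc_mem_vn N hA hsa (gfun c) (gfun_cont c)
    have hAG : A * G = Tc := by
      have h := cfc_mul (fun t : ℝ => t) (gfun c) A (by fun_prop)
        ((gfun_cont c).continuousOn)
      rw [cfc_id' ℝ A hsa] at h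
      rw [hGdef, ← h, hTcdef]
      exact cfc_congr fun t _ => (hfun_eq_mul c t).symm
    have hGA : G * A = Tc := by
      have h := cfc_mul (gfun c) (fun t : ℝ => t) A ((gfun_cont c).continuousOn)
        (by fun_prop)
      rw [cfc_id' ℝ A hsa] at h
      rw [hGdef, ← h, hTcdef]
      exact cfc_congr fun t _ => (hfun_eq_mul' c t).symm
    have hY : A * (G * X * G) * A = Tc * X * Tc := by
      have h' : A * (G * X * G) * A = (A * G) * (X * (G * A)) := by
        simp only [mul_assoc]
      rw [h', hAG, hGA, ← mul_assoc]
    refine ⟨A * (G * X * G) * A, ⟨G * X * G, mul_mem (mul_mem hGN hXN) hGN, rfl⟩, ?_⟩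
    intro v hv
    rw [hY]
    obtain ⟨b1, b2⟩ := hc₀ v c (hcge v hv)
    have hsplit : (E * X * E - Tc * X * Tc) v
        = (E (X (E v)) - Tc (X (E v))) + Tc (X (E v) - X (Tc v)) := by
      simp only [sub_apply, mul_apply, map_sub]
      abel
    rw [hsplit]
    have hXδ : ‖X‖ * δ < ε / 2 := by
      have hδ' : δ * (2 * (‖X‖ + 1)) = ε := div_mul_cancel₀ _ (by positivity)
      nlinarith [hδ, norm_nonneg X]
    have hb2' : ‖Tc (X (E v) - X (Tc v))‖ ≤ ‖X‖ * ‖E v - Tc v‖ := by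
      calc ‖Tc (X (E v) - X (Tc v))‖ ≤ ‖Tc‖ * ‖X (E v) - X (Tc v)‖ := le_opNorm _ _
        _ ≤ 1 * ‖X (E v) - X (Tc v)‖ :=
            mul_le_mul_of_nonneg_right (norm_cfc_hfun_le_one c) (norm_nonneg _)
        _ = ‖X (E v - Tc v)‖ := by rw [one_mul, map_sub]
        _ ≤ ‖X‖ * ‖E v - Tc v‖ := le_opNorm _ _
    have b1' : ‖E v - Tc v‖ < δ := by rw [norm_sub_rev]; exact b1
    have b2' : ‖E (X (E v)) - Tc (X (E v))‖ < ε / 2 := by rw [norm_sub_rev]; exact b2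
    calc ‖(E (X (E v)) - Tc (X (E v))) + Tc (X (E v) - X (Tc v))‖
        ≤ ‖E (X (E v)) - Tc (X (E v))‖ + ‖Tc (X (E v) - X (Tc v))‖ := norm_add_le _ _
      _ < ε / 2 + ε / 2 := by
          refine add_lt_add_of_lt_of_le b2' ?_
          exact le_of_lt (lt_of_le_of_lt
            (hb2'.trans (mul_le_mul_of_nonneg_left b1'.le (norm_nonneg X))) hXδ)
      _ = ε := by ring
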